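/- Then the function P_n(x) = (1/√(2π)) ∫_ℝ p_n(iu) e^{(x−iu)²/2} du (the inverse Weierstrass transform of p_n) is a monic polynomial of degree n with real coefficients, and ∫_ℝ P_n(x) Q_k(x) dx = 0 for every k = 0,…,n−1. -/

import Mathlib

open MeasureTheory Set Polynomial Complex Filter

lemma intRexp (b c : ℝ) (hb : 0 < b) :
    Integrable fun u : ℝ => Real.exp (-b * u ^ 2 + c * u) := by
  have h := (integrable_cexp_quadratic (b := (b:ℂ)) (by simpa using hb) (c) 0).norm
  refine h.congr (Eventually.of_forall fun u => ?_)
  have : (-(b:ℂ) * u ^ 2 + c * u + 0) = ((-b * u^2 + c*u : ℝ) : ℂ) := by push_cast; ring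
  simp only [Complex.norm_exp, this, Complex.ofReal_re]

lemma intPG (m : ℕ) (b c : ℝ) (hb : 0 < b) :
    Integrable fun u : ℝ => |u| ^ m * Real.exp (-b * u ^ 2 + c * u) := by
  have key : ∀ u : ℝ, |u| ^ m * Real.exp (-b * u ^ 2 + c * u) ≤
      (m.factorial : ℝ) * (Real.exp (-b * u ^ 2 + (c+1) * u) + Real.exp (-b * u ^ 2 + (c-1) * u)) := by
    intro u
    have h1 : |u| ^ m ≤ (m.factorial : ℝ) * Real.exp |u| := by
      have := Real.pow_div_factorial_le_exp (x := |u|) (abs_nonneg u) m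
      rw [div_le_iff₀ (by positivity)] at this
      linarith [this]
    have h2 : Real.exp |u| ≤ Real.exp u + Real.exp (-u) := by
      rcases abs_cases u with ⟨h, _⟩ | ⟨h, _⟩ <;> rw [h] <;>
        [linarith [Real.exp_pos (-u)]; linarith [Real.exp_pos u]]
    calc |u| ^ m * Real.exp (-b * u ^ 2 + c * u)
        ≤ (m.factorial : ℝ) * Real.exp |u| * Real.exp (-b * u ^ 2 + c * u) := by
          apply mul_le_mul_of_nonneg_right h1 (Real.exp_pos _).le
      _ ≤ (m.factorial : ℝ) * (Real.exp u + Real.exp (-u)) * Real.exp (-b * u ^ 2 + c * u) := by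
          apply mul_le_mul_of_nonneg_right _ (Real.exp_pos _).le
          exact mul_le_mul_of_nonneg_left h2 (by positivity)
      _ = (m.factorial : ℝ) * (Real.exp (-b * u ^ 2 + (c+1) * u) + Real.exp (-b * u ^ 2 + (c-1) * u)) := by
          rw [add_mul, mul_assoc, add_mul, ← Real.exp_add, ← Real.exp_add, mul_add]
          ring_nf
  refine Integrable.mono' ((((intRexp b (c+1) hb).add (intRexp b (c-1) hb)).const_mul
    ((m.factorial : ℝ))).congr (Eventually.of_forall fun u => rfl))
    (Continuous.aestronglyMeasurable (by continuity)) (Eventually.of_forall fun u => ?_)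
  simp only [Pi.add_apply]
  rw [Real.norm_eq_abs, _root_.abs_of_nonneg (by positivity)]
  exact key u
open MeasureTheory Set Polynomial Complex Filter

noncomputable def He (m : ℕ) : Polynomial ℝ := (Polynomial.hermite m).map (Int.castRingHom ℝ)

lemma He_zero : He 0 = 1 := by simp [He]

lemma He_succ (m : ℕ) : He (m+1) = X * He m - derivative (He m) := by
  simp [He, Polynomial.hermite_succ, Polynomial.derivative_map]

lemma He_deriv (m : ℕ) : derivative (He (m+1)) = C ((m:ℝ)+1) * He m := by
  induction m with
  | zero => simp [He_succ, He_zero]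
  | succ k ih =>
      rw [He_succ (k+1), derivative_sub, derivative_mul, derivative_X, ih, He_succ k]
      rw [derivative_mul]
      simp only [derivative_add, derivative_C, derivative_one, ih, C_add, C_1, map_ofNat,
        Nat.cast_add, Nat.cast_one]
      ring

lemma exp_sq_norm (x u : ℝ) :
    ‖Complex.exp (((x:ℂ) - I*u)^2/2)‖ = Real.exp ((x^2 - u^2)/2) := by
  have h : ((x:ℂ) - I*u)^2/2 = (((x^2-u^2)/2 : ℝ) : ℂ) + ((-(x*u) : ℝ) : ℂ) * I := by
    push_cast
    linear_combination ((u:ℂ)^2/2) * Complex.I_sq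
  rw [Complex.norm_exp, h]
  simp [← Complex.ofReal_pow]

lemma intC (r : Polynomial ℂ) (x : ℝ) :
    Integrable fun u : ℝ => r.eval (I*u) * Complex.exp (((x:ℂ) - I*u)^2/2) := by
  have hrw : (fun u : ℝ => r.eval (I*u) * Complex.exp (((x:ℂ) - I*u)^2/2))
      = fun u : ℝ => ∑ i ∈ Finset.range (r.natDegree + 1),
        r.coeff i * (I*u)^i * Complex.exp (((x:ℂ) - I*u)^2/2) := by
    funext u
    rw [eval_eq_sum_range, Finset.sum_mul]
  rw [hrw]
  apply integrable_finset_sum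
  intro i _
  refine Integrable.mono' ((intPG i (1/2) 0 (by norm_num)).const_mul
      (‖r.coeff i‖ * Real.exp (x^2/2))) (Continuous.aestronglyMeasurable (by fun_prop))
      (Eventually.of_forall fun u => ?_)
  rw [norm_mul, norm_mul, norm_pow, exp_sq_norm]
  have h1 : ‖I * (u:ℂ)‖ = |u| := by simp
  rw [h1]
  apply le_of_eq
  rw [show (x^2 - u^2)/2 = x^2/2 + (-(1/2) * u^2 + 0*u) by ring, Real.exp_add]
  ring

lemma hasDerivAt_h (r : Polynomial ℂ) (x : ℝ) (u : ℝ) :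
    HasDerivAt (fun u : ℝ => r.eval (I*u) * Complex.exp (((x:ℂ) - I*u)^2/2))
      ((derivative r).eval (I*u) * I * Complex.exp (((x:ℂ) - I*u)^2/2)
        + r.eval (I*u) * (Complex.exp (((x:ℂ) - I*u)^2/2) * (-((x:ℂ)-I*u)) * I)) u := by
  have hz : HasDerivAt (fun z : ℂ => I*z) I (u:ℂ) := by
    simpa using (hasDerivAt_id (u:ℂ)).const_mul I
  have h1 : HasDerivAt (fun u : ℝ => r.eval (I*(u:ℂ))) ((derivative r).eval (I*u) * I) u := by
    exact ((r.hasDerivAt (I*(u:ℂ))).comp (u:ℂ) hz).comp_ofReal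
  have hg : HasDerivAt (fun z : ℂ => Complex.exp (((x:ℂ) - z)^2/2))
      (Complex.exp (((x:ℂ) - I*u)^2/2) * (-((x:ℂ)-I*u))) (I*u) := by
    have hinner : HasDerivAt (fun z : ℂ => ((x:ℂ) - z)^2/2) (-((x:ℂ)-I*u)) (I*u) := by
      have := (((hasDerivAt_id (I*(u:ℂ))).const_sub (x:ℂ)).pow 2).div_const 2
      refine this.congr_deriv ?_
      simp only [id]
      ring
    simpa using hinner.cexp
  have h2 : HasDerivAt (fun u : ℝ => Complex.exp (((x:ℂ) - I*u)^2/2))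
      (Complex.exp (((x:ℂ) - I*u)^2/2) * (-((x:ℂ)-I*u)) * I) u :=
    (hg.comp (u:ℂ) hz).comp_ofReal
  exact h1.mul h2

lemma ibp1 (r : Polynomial ℂ) (x : ℝ) :
    ∫ u : ℝ, (X*r).eval (I*u) * Complex.exp (((x:ℂ) - I*u)^2/2)
      = x * (∫ u : ℝ, r.eval (I*u) * Complex.exp (((x:ℂ) - I*u)^2/2))
        - ∫ u : ℝ, (derivative r).eval (I*u) * Complex.exp (((x:ℂ) - I*u)^2/2) := by
  have hint1 := intC r x
  have hint2 := intC (derivative r) x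
  have hint3 := intC (X*r) x
  have hrw : ∀ u : ℝ, (derivative r).eval (I*u) * I * Complex.exp (((x:ℂ) - I*u)^2/2)
        + r.eval (I*u) * (Complex.exp (((x:ℂ) - I*u)^2/2) * (-((x:ℂ)-I*u)) * I)
      = I * ((derivative r).eval (I*u) * Complex.exp (((x:ℂ) - I*u)^2/2))
        + ((-I*x) * (r.eval (I*u) * Complex.exp (((x:ℂ) - I*u)^2/2))
          + I * ((X*r).eval (I*u) * Complex.exp (((x:ℂ) - I*u)^2/2))) := by
    intro u
    simp only [eval_mul, eval_X]
    ring
  have hzero : (0:ℂ) = I * (∫ u : ℝ, (derivative r).eval (I*u) * Complex.exp (((x:ℂ) - I*u)^2/2))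
        + ((-I*x) * (∫ u : ℝ, r.eval (I*u) * Complex.exp (((x:ℂ) - I*u)^2/2))
          + I * ∫ u : ℝ, (X*r).eval (I*u) * Complex.exp (((x:ℂ) - I*u)^2/2)) := by
    have h0 : ∫ u : ℝ, (I * ((derivative r).eval (I*u) * Complex.exp (((x:ℂ) - I*u)^2/2))
        + ((-I*x) * (r.eval (I*u) * Complex.exp (((x:ℂ) - I*u)^2/2))
          + I * ((X*r).eval (I*u) * Complex.exp (((x:ℂ) - I*u)^2/2)))) = 0 := by
      rw [integral_congr_ae (Eventually.of_forall fun u => (hrw u).symm)]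
      exact integral_eq_zero_of_hasDerivAt_of_integrable (fun u => hasDerivAt_h r x u)
        (((hint2.const_mul I).add ((hint1.const_mul (-I*(x:ℂ))).add (hint3.const_mul I))).congr
          (Eventually.of_forall fun u => (hrw u).symm)) hint1
    have hadd : Integrable (fun u : ℝ => (-I*(x:ℂ)) * (r.eval (I*u) * Complex.exp (((x:ℂ) - I*u)^2/2))
        + I * ((X*r).eval (I*u) * Complex.exp (((x:ℂ) - I*u)^2/2))) :=
      (hint1.const_mul (-I*(x:ℂ))).add (hint3.const_mul I)
    rw [integral_add (hint2.const_mul I) hadd,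
      integral_add (hint1.const_mul (-I*(x:ℂ))) (hint3.const_mul I),
      integral_const_mul, integral_const_mul, integral_const_mul] at h0
    exact h0.symm
  have hfac : I * ((∫ u : ℝ, (derivative r).eval (I*u) * Complex.exp (((x:ℂ) - I*u)^2/2))
      - x * (∫ u : ℝ, r.eval (I*u) * Complex.exp (((x:ℂ) - I*u)^2/2))
      + ∫ u : ℝ, (X*r).eval (I*u) * Complex.exp (((x:ℂ) - I*u)^2/2)) = 0 := by
    rw [eq_comm] at hzero
    linear_combination hzero
  rcases mul_eq_zero.mp hfac with h | h
  · exact absurd h I_ne_zero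
  · linear_combination h

lemma Fm (m : ℕ) (x : ℝ) :
    ∫ u : ℝ, (I*(u:ℂ))^m * Complex.exp (((x:ℂ) - I*u)^2/2)
      = ((Real.sqrt (2*Real.pi) : ℝ) : ℂ) * (((He m).eval x : ℝ) : ℂ) := by
  induction m using Nat.strong_induction_on with
  | _ m ih =>
    match m with
    | 0 =>
        have hb : (-(1/2:ℂ)).re < 0 := by norm_num
        have hexp : ∀ u : ℝ, ((x:ℂ) - I*u)^2/2 = -(1/2:ℂ)*u^2 + (-I*x)*u + (x:ℂ)^2/2 := by
          intro u
          linear_combination ((u:ℂ)^2/2) * Complex.I_sq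
        have hint : ∫ u : ℝ, Complex.exp (((x:ℂ) - I*u)^2/2)
            = ((Real.pi:ℂ) / -(-(1/2:ℂ)))^(1/2:ℂ)
              * Complex.exp ((x:ℂ)^2/2 - (-I*x)^2/(4 * -(1/2:ℂ))) := by
          rw [← integral_cexp_quadratic hb (-I*x) ((x:ℂ)^2/2)]
          exact integral_congr_ae (Eventually.of_forall fun u => by beta_reduce; rw [hexp u])
        have h1 : ((Real.pi:ℂ) / -(-(1/2:ℂ))) = ((2*Real.pi : ℝ):ℂ) := by push_cast; ring
        have h2 : ((x:ℂ)^2/2 - (-I*x)^2/(4 * -(1/2:ℂ))) = 0 := by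
          linear_combination ((x:ℂ)^2/2) * Complex.I_sq
        have h3 : ((2*Real.pi:ℝ):ℂ)^(1/2:ℂ) = ((Real.sqrt (2*Real.pi) : ℝ):ℂ) := by
          rw [Real.sqrt_eq_rpow, Complex.ofReal_cpow (by positivity)]
          norm_num
        simp only [pow_zero, one_mul]
        rw [hint, h1, h2, h3, Complex.exp_zero, mul_one, He_zero]
        simp
    | (k+1) =>
        have h := ibp1 (X^k : Polynomial ℂ) x
        have e1 : (∫ u : ℝ, ((X*X^k : Polynomial ℂ)).eval (I*u) * Complex.exp (((x:ℂ) - I*u)^2/2))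
            = ∫ u : ℝ, (I*(u:ℂ))^(k+1) * Complex.exp (((x:ℂ) - I*u)^2/2) :=
          integral_congr_ae (Eventually.of_forall fun u => by simp [pow_succ]; ring_nf)
        have e2 : (∫ u : ℝ, ((X^k : Polynomial ℂ)).eval (I*u) * Complex.exp (((x:ℂ) - I*u)^2/2))
            = ∫ u : ℝ, (I*(u:ℂ))^k * Complex.exp (((x:ℂ) - I*u)^2/2) :=
          integral_congr_ae (Eventually.of_forall fun u => by simp)
        rw [e1, e2, ih k (by omega)] at h
        match k with
        | 0 =>
            rw [h]
            have : derivative (X^0 : Polynomial ℂ) = 0 := by simp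
            rw [this]
            simp only [eval_zero, zero_mul, integral_zero, sub_zero, He_succ, He_zero]
            simp
            ring
        | (j+1) =>
            have hd : derivative (X^(j+1) : Polynomial ℂ) = C ((j:ℂ)+1) * X^j := by
              rw [derivative_X_pow]
              push_cast
              simp
            have e3 : (∫ u : ℝ, ((derivative (X^(j+1) : Polynomial ℂ))).eval (I*u)
                  * Complex.exp (((x:ℂ) - I*u)^2/2))
                = ((j:ℂ)+1) * ∫ u : ℝ, (I*(u:ℂ))^j * Complex.exp (((x:ℂ) - I*u)^2/2) := by
              rw [← integral_const_mul]
              exact integral_congr_ae (Eventually.of_forall fun u => by rw [hd]; simp; ring)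
            rw [e3, ih j (by omega)] at h
            rw [h, He_succ (j+1), He_deriv j]
            push_cast
            simp only [eval_sub, eval_mul, eval_X, eval_C]
            push_cast
            ring

lemma intR (p : Polynomial ℝ) (t : ℝ) :
    Integrable fun x : ℝ => p.eval x * Real.exp (-(x-t)^2/2) := by
  have hrw : (fun x : ℝ => p.eval x * Real.exp (-(x-t)^2/2))
      = fun x : ℝ => ∑ i ∈ Finset.range (p.natDegree + 1),
        p.coeff i * x^i * Real.exp (-(x-t)^2/2) := by
    funext x
    rw [eval_eq_sum_range, Finset.sum_mul]
  rw [hrw]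
  apply integrable_finset_sum
  intro i _
  refine Integrable.mono' ((intPG i (1/2) t (by norm_num)).const_mul
      (|p.coeff i| * Real.exp (-t^2/2))) (Continuous.aestronglyMeasurable (by fun_prop))
      (Eventually.of_forall fun x => ?_)
  rw [Real.norm_eq_abs, abs_mul, abs_mul, _root_.abs_pow, _root_.abs_of_nonneg (Real.exp_pos _).le]
  apply le_of_eq
  rw [show -(x-t)^2/2 = -t^2/2 + (-(1/2)*x^2 + t*x) by ring, Real.exp_add]
  ring

lemma hasDerivAt_hR (p : Polynomial ℝ) (t x : ℝ) :
    HasDerivAt (fun x : ℝ => p.eval x * Real.exp (-(x-t)^2/2))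
      ((derivative p).eval x * Real.exp (-(x-t)^2/2)
        + p.eval x * (Real.exp (-(x-t)^2/2) * (-(x-t)))) x := by
  have hinner : HasDerivAt (fun x : ℝ => -(x-t)^2/2) (-(x-t)) x := by
    have := (((hasDerivAt_id x).sub_const t).pow 2).neg.div_const 2
    refine this.congr_deriv ?_
    simp only [id]
    ring
  exact (p.hasDerivAt x).mul hinner.exp

lemma ibp2 (p : Polynomial ℝ) (t : ℝ) :
    ∫ x : ℝ, (X*p).eval x * Real.exp (-(x-t)^2/2)
      = (∫ x : ℝ, (derivative p).eval x * Real.exp (-(x-t)^2/2))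
        + t * ∫ x : ℝ, p.eval x * Real.exp (-(x-t)^2/2) := by
  have hint1 := intR p t
  have hint2 := intR (derivative p) t
  have hint3 := intR (X*p) t
  have hrw : ∀ x : ℝ, (derivative p).eval x * Real.exp (-(x-t)^2/2)
        + p.eval x * (Real.exp (-(x-t)^2/2) * (-(x-t)))
      = (derivative p).eval x * Real.exp (-(x-t)^2/2)
        + ((-1) * ((X*p).eval x * Real.exp (-(x-t)^2/2))
          + t * (p.eval x * Real.exp (-(x-t)^2/2))) := by
    intro x; simp only [eval_mul, eval_X]; ring
  have h0 : (∫ x : ℝ, ((derivative p).eval x * Real.exp (-(x-t)^2/2)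
        + ((-1) * ((X*p).eval x * Real.exp (-(x-t)^2/2))
          + t * (p.eval x * Real.exp (-(x-t)^2/2))))) = 0 := by
    rw [integral_congr_ae (Eventually.of_forall fun x => (hrw x).symm)]
    exact integral_eq_zero_of_hasDerivAt_of_integrable (fun x => hasDerivAt_hR p t x)
      ((hint2.add ((hint3.const_mul (-1)).add (hint1.const_mul t))).congr
        (Eventually.of_forall fun x => (hrw x).symm)) hint1
  have hadd : Integrable (fun x : ℝ => (-1) * ((X*p).eval x * Real.exp (-(x-t)^2/2))
      + t * (p.eval x * Real.exp (-(x-t)^2/2))) := (hint3.const_mul (-1)).add (hint1.const_mul t)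
  rw [integral_add hint2 hadd, integral_add (hint3.const_mul (-1)) (hint1.const_mul t),
    integral_const_mul, integral_const_mul] at h0
  linarith [h0]

lemma Wm (m : ℕ) (t : ℝ) :
    ∫ x : ℝ, (He m).eval x * Real.exp (-(x-t)^2/2) = Real.sqrt (2*Real.pi) * t^m := by
  induction m with
  | zero =>
      simp only [He_zero, eval_one, one_mul, pow_zero, mul_one]
      have h1 : (fun x : ℝ => Real.exp (-(x-t)^2/2))
          = fun x : ℝ => (fun y : ℝ => Real.exp (-(1/2) * y^2)) (x - t) := by
        funext x
        beta_reduce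
        ring_nf
      rw [h1, integral_sub_right_eq_self (μ := volume) (fun y : ℝ => Real.exp (-(1/2) * y^2)) t,
        integral_gaussian (1/2)]
      rw [show Real.pi / (1/2) = 2 * Real.pi by ring]
  | succ k ihk =>
      have h1 : (∫ x : ℝ, (He (k+1)).eval x * Real.exp (-(x-t)^2/2))
          = (∫ x : ℝ, (X * He k).eval x * Real.exp (-(x-t)^2/2))
            - ∫ x : ℝ, (derivative (He k)).eval x * Real.exp (-(x-t)^2/2) := by
        rw [← integral_sub (intR (X * He k) t) (intR (derivative (He k)) t)]
        exact integral_congr_ae (Eventually.of_forall fun x => by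
          rw [He_succ]; simp only [eval_sub]; ring)
      rw [h1, ibp2 (He k) t, ihk]
      ring

lemma He_monic (m : ℕ) : (He m).Monic := (Polynomial.hermite_monic m).map _

lemma He_natDegree (m : ℕ) : (He m).natDegree = m := by
  rw [He, (Polynomial.hermite_monic m).natDegree_map, Polynomial.natDegree_hermite]

/-- The inverse Weierstrass transform `P_n` of a monic real polynomial `p_n` of
degree `n` that is orthogonal to `q_0, …, q_{n-1}` is again a monic real
polynomial of degree `n`, and it is orthogonal to the Weierstrass transforms
`Q_0, …, Q_{n-1}`. -/
theorem stmt5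
    (n : ℕ) (hn : 1 ≤ n)
    (q : ℕ → ℝ → ℝ) (hqmeas : ∀ k < n, Measurable (q k))
    (hqint : ∀ k < n, Integrable (fun t : ℝ => (1 + |t|) ^ n * |q k t|))
    (Q : ℕ → ℝ → ℝ)
    (hQ : ∀ k < n, ∀ y : ℝ, Q k y = (Real.sqrt (2 * Real.pi))⁻¹ *
      ∫ t : ℝ, q k t * Real.exp (-(y - t) ^ 2 / 2))
    (pn : Polynomial ℝ) (hmonic : pn.Monic) (hdeg : pn.natDegree = n)
    (horth : ∀ k < n, ∫ t : ℝ, pn.eval t * q k t = 0)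
    (Pn : ℝ → ℂ)
    (hPn : ∀ x : ℝ, Pn x = ((Real.sqrt (2 * Real.pi) : ℝ) : ℂ)⁻¹ *
      ∫ u : ℝ, (Polynomial.aeval (Complex.I * (u : ℂ))) pn *
        Complex.exp (((x : ℂ) - Complex.I * u) ^ 2 / 2)) :
    (∃ P : Polynomial ℝ, P.Monic ∧ P.natDegree = n ∧
      ∀ x : ℝ, Pn x = ((P.eval x : ℝ) : ℂ)) ∧
    ∀ k < n,
      Integrable (fun x : ℝ => Pn x * (Q k x : ℂ)) ∧
      ∫ x : ℝ, Pn x * (Q k x : ℂ) = 0 := by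
  have hs0 : (0:ℝ) < Real.sqrt (2 * Real.pi) := Real.sqrt_pos.mpr (by positivity)
  set P : Polynomial ℝ := ∑ m ∈ Finset.range (n+1), C (pn.coeff m) * He m with hP
  -- coefficient n of P is 1
  have hcoeff : P.coeff n = 1 := by
    rw [hP, Polynomial.finset_sum_coeff]
    rw [Finset.sum_eq_single n]
    · have h1 : pn.coeff n = 1 := by rw [← hdeg]; exact hmonic.coeff_natDegree
      have h2 : (He n).coeff n = 1 := by
        have := (He_monic n).coeff_natDegree
        rwa [He_natDegree n] at this
      rw [Polynomial.coeff_C_mul, h1, h2, mul_one]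
    · intro m hm hmn
      have hmn' : m < n := lt_of_le_of_ne (Nat.lt_succ_iff.mp (Finset.mem_range.mp hm)) hmn
      have h2 : (He m).coeff n = 0 :=
        Polynomial.coeff_eq_zero_of_natDegree_lt (by rw [He_natDegree]; exact hmn')
      rw [Polynomial.coeff_C_mul, h2, mul_zero]
    · intro h
      exact absurd (Finset.self_mem_range_succ n) h
  have hdegle : P.natDegree ≤ n := by
    apply Polynomial.natDegree_sum_le_of_forall_le
    intro m hm
    exact le_trans (Polynomial.natDegree_C_mul_le _ _)
      (by rw [He_natDegree]; exact Nat.lt_succ_iff.mp (Finset.mem_range.mp hm))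
  have hPmonic : P.Monic := Polynomial.monic_of_natDegree_le_of_coeff_eq_one n hdegle hcoeff
  have hPdeg : P.natDegree = n :=
    le_antisymm hdegle (Polynomial.le_natDegree_of_ne_zero (by rw [hcoeff]; exact one_ne_zero))
  -- evaluation of Pn
  have hPe : ∀ x : ℝ, P.eval x = ∑ i ∈ Finset.range (n+1), pn.coeff i * (He i).eval x := by
    intro x
    rw [hP, Polynomial.eval_finset_sum]
    exact Finset.sum_congr rfl fun i _ => by rw [eval_mul, eval_C]
  have hval : ∀ x : ℝ, Pn x = ((P.eval x : ℝ) : ℂ) := by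
    intro x
    rw [hPn x]
    have haev : ∀ u : ℝ, (Polynomial.aeval (Complex.I * (u : ℂ))) pn
        = ∑ i ∈ Finset.range (n+1), ((pn.coeff i : ℝ) : ℂ) * (I * (u:ℂ))^i := by
      intro u
      rw [Polynomial.aeval_eq_sum_range' (by omega : pn.natDegree < n+1)]
      exact Finset.sum_congr rfl fun i _ => by rw [Algebra.smul_def]; rfl
    have hintterm : ∀ i : ℕ, Integrable fun u : ℝ =>
        ((pn.coeff i : ℝ) : ℂ) * (I * (u:ℂ))^i * Complex.exp (((x:ℂ) - I*u)^2/2) := by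
      intro i
      refine ((intC (X^i) x).const_mul ((pn.coeff i : ℝ) : ℂ)).congr
        (Eventually.of_forall fun u => ?_)
      beta_reduce
      rw [eval_pow, eval_X]
      ring
    have hsum : (∫ u : ℝ, (Polynomial.aeval (Complex.I * (u : ℂ))) pn
          * Complex.exp (((x : ℂ) - Complex.I * u) ^ 2 / 2))
        = ∑ i ∈ Finset.range (n+1), ((pn.coeff i : ℝ) : ℂ)
            * ∫ u : ℝ, (I * (u:ℂ))^i * Complex.exp (((x:ℂ) - I*u)^2/2) := by
      rw [integral_congr_ae (Eventually.of_forall fun u => by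
        beta_reduce
        rw [haev u, Finset.sum_mul])]
      rw [integral_finset_sum _ fun i _ => hintterm i]
      exact Finset.sum_congr rfl fun i _ => by
        rw [← integral_const_mul]
        exact integral_congr_ae (Eventually.of_forall fun u => by beta_reduce; ring)
    rw [hsum]
    have : ∑ i ∈ Finset.range (n+1), ((pn.coeff i : ℝ) : ℂ)
          * ∫ u : ℝ, (I * (u:ℂ))^i * Complex.exp (((x:ℂ) - I*u)^2/2)
        = ((Real.sqrt (2*Real.pi) : ℝ) : ℂ) * ((P.eval x : ℝ) : ℂ) := by
      rw [Finset.sum_congr rfl fun i _ => by rw [Fm i x]]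
      rw [hPe x]
      push_cast
      rw [Finset.mul_sum]
      exact Finset.sum_congr rfl fun i _ => by ring
    rw [this, ← mul_assoc, inv_mul_cancel₀ (by exact_mod_cast hs0.ne'), one_mul]
  refine ⟨⟨P, hPmonic, hPdeg, hval⟩, ?_⟩
  intro k hk
  -- real versions
  have hq1 := hqint k hk
  have hqm := hqmeas k hk
  -- integrability of the kernel on the product space
  have hg1 : Integrable fun s : ℝ => (1+|s|)^n * Real.exp (-s^2/2) := by
    have hrw : (fun s : ℝ => (1+|s|)^n * Real.exp (-s^2/2))
        = fun s : ℝ => ∑ j ∈ Finset.range (n+1),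
            (1:ℝ)^j * |s|^(n-j) * (n.choose j : ℝ) * Real.exp (-s^2/2) := by
      funext s
      rw [← Finset.sum_mul, ← add_pow]
    rw [hrw]
    apply integrable_finset_sum
    intro j _
    refine ((intPG (n-j) (1/2) 0 (by norm_num)).const_mul ((n.choose j : ℝ))).congr
      (Eventually.of_forall fun s => ?_)
    beta_reduce
    rw [show -(1/2)*s^2 + 0*s = -s^2/2 by ring]
    ring
  have hh : Integrable fun t : ℝ => (1 + |t|) ^ n * |q k t| := hq1
  have hprod0 : Integrable (fun p : ℝ×ℝ =>
      ((1+|p.1|)^n * Real.exp (-p.1^2/2)) * ((1 + |p.2|) ^ n * |q k p.2|))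
      (volume.prod volume) := hg1.mul_prod hh
  have hprod : Integrable (fun p : ℝ×ℝ =>
      ((1+|p.1 - p.2|)^n * Real.exp (-(p.1-p.2)^2/2)) * ((1 + |p.2|) ^ n * |q k p.2|))
      (volume.prod volume) := by
    have := ((measurePreserving_sub_prod (volume : Measure ℝ)
      (volume : Measure ℝ)).integrable_comp hprod0.aestronglyMeasurable).mpr hprod0
    exact this.congr (Eventually.of_forall fun p => rfl)
  set Cp : ℝ := ∑ i ∈ Finset.range (n+1), |P.coeff i| with hCp
  have hPb : ∀ x : ℝ, |P.eval x| ≤ Cp * (1+|x|)^n := by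
    intro x
    have h1 : P.eval x = ∑ i ∈ Finset.range (n+1), P.coeff i * x^i := by
      rw [eval_eq_sum_range, hPdeg]
    rw [h1, hCp, Finset.sum_mul]
    refine le_trans (Finset.abs_sum_le_sum_abs _ _) (Finset.sum_le_sum fun i hi => ?_)
    rw [abs_mul, _root_.abs_pow]
    apply mul_le_mul_of_nonneg_left _ (abs_nonneg _)
    calc |x|^i ≤ (1+|x|)^i := by
          apply pow_le_pow_left₀ (abs_nonneg x)
          linarith
      _ ≤ (1+|x|)^n := by
          apply pow_le_pow_right₀ (by linarith [abs_nonneg x])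
          exact Nat.lt_succ_iff.mp (Finset.mem_range.mp hi)
  have hkey : ∀ x t : ℝ, (1+|x|)^n ≤ (1+|x-t|)^n * (1+|t|)^n := by
    intro x t
    rw [← mul_pow]
    apply pow_le_pow_left₀ (by linarith [abs_nonneg x])
    have h1 : |x| ≤ |x-t| + |t| := by
      calc |x| = |(x-t) + t| := by ring_nf
        _ ≤ |x-t| + |t| := abs_add_le _ _
    nlinarith [abs_nonneg (x-t), abs_nonneg t]
  have hK : Integrable (fun p : ℝ×ℝ =>
      P.eval p.1 * (q k p.2 * Real.exp (-(p.1 - p.2)^2/2))) (volume.prod volume) := by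
    refine Integrable.mono' (hprod.const_mul Cp) ?_ (Eventually.of_forall fun p => ?_)
    · refine AEStronglyMeasurable.mul ?_ (AEStronglyMeasurable.mul ?_ ?_)
      · exact ((P.continuous_aeval.comp continuous_fst).aestronglyMeasurable)
      · exact (hqm.comp measurable_snd).aestronglyMeasurable
      · exact (Continuous.aestronglyMeasurable (by fun_prop))
    · beta_reduce
      rw [Real.norm_eq_abs, abs_mul, abs_mul, _root_.abs_of_nonneg (Real.exp_pos _).le]
      calc |P.eval p.1| * (|q k p.2| * Real.exp (-(p.1 - p.2)^2/2))
          ≤ (Cp * (1+|p.1|)^n) * (|q k p.2| * Real.exp (-(p.1 - p.2)^2/2)) := by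
            apply mul_le_mul_of_nonneg_right (hPb p.1) (by positivity)
        _ ≤ (Cp * ((1+|p.1-p.2|)^n * (1+|p.2|)^n)) * (|q k p.2| * Real.exp (-(p.1 - p.2)^2/2)) := by
            have hCpnn : 0 ≤ Cp := Finset.sum_nonneg fun i _ => abs_nonneg _
            apply mul_le_mul_of_nonneg_right _ (by positivity)
            exact mul_le_mul_of_nonneg_left (hkey p.1 p.2) hCpnn
        _ = Cp * (((1+|p.1 - p.2|)^n * Real.exp (-(p.1-p.2)^2/2)) * ((1 + |p.2|) ^ n * |q k p.2|)) := by
            ring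
  -- real integrability and vanishing
  have hQc : ∀ x : ℝ, P.eval x * Q k x
      = (Real.sqrt (2 * Real.pi))⁻¹ * ∫ t : ℝ, P.eval x * (q k t * Real.exp (-(x - t)^2/2)) := by
    intro x
    rw [hQ k hk x, integral_const_mul]
    ring
  have hRint : Integrable fun x : ℝ => P.eval x * Q k x := by
    refine ((hK.integral_prod_left).const_mul ((Real.sqrt (2 * Real.pi))⁻¹)).congr
      (Eventually.of_forall fun x => ?_)
    beta_reduce
    exact (hQc x).symm
  have hinner : ∀ t : ℝ, (∫ x : ℝ, P.eval x * (q k t * Real.exp (-(x - t)^2/2)))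
      = q k t * (Real.sqrt (2*Real.pi) * pn.eval t) := by
    intro t
    have h1 : (∫ x : ℝ, P.eval x * (q k t * Real.exp (-(x - t)^2/2)))
        = q k t * ∫ x : ℝ, P.eval x * Real.exp (-(x - t)^2/2) := by
      rw [← integral_const_mul]
      exact integral_congr_ae (Eventually.of_forall fun x => by beta_reduce; ring)
    rw [h1]
    congr 1
    have h2 : (∫ x : ℝ, P.eval x * Real.exp (-(x - t)^2/2))
        = ∑ i ∈ Finset.range (n+1), pn.coeff i
            * ∫ x : ℝ, (He i).eval x * Real.exp (-(x - t)^2/2) := by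
      rw [integral_congr_ae (Eventually.of_forall fun x => by
        beta_reduce
        rw [hPe x, Finset.sum_mul])]
      rw [integral_finset_sum _ fun i _ => ((intR (He i) t).const_mul (pn.coeff i)).congr
        (Eventually.of_forall fun x => by beta_reduce; ring)]
      exact Finset.sum_congr rfl fun i _ => by
        rw [← integral_const_mul]
        exact integral_congr_ae (Eventually.of_forall fun x => by beta_reduce; ring)
    rw [h2, Finset.sum_congr rfl fun i _ => by rw [Wm i t]]
    have h3 : pn.eval t = ∑ i ∈ Finset.range (n+1), pn.coeff i * t^i := by
      rw [eval_eq_sum_range, hdeg]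
    rw [h3, Finset.mul_sum]
    exact Finset.sum_congr rfl fun i _ => by ring
  have hRzero : (∫ x : ℝ, P.eval x * Q k x) = 0 := by
    have h1 : (∫ x : ℝ, P.eval x * Q k x)
        = (Real.sqrt (2 * Real.pi))⁻¹
          * ∫ x : ℝ, ∫ t : ℝ, P.eval x * (q k t * Real.exp (-(x - t)^2/2)) := by
      rw [← integral_const_mul]
      exact integral_congr_ae (Eventually.of_forall fun x => by beta_reduce; rw [hQc x])
    rw [h1, integral_integral_swap hK]
    have h2 : (∫ t : ℝ, ∫ x : ℝ, P.eval x * (q k t * Real.exp (-(x - t)^2/2)))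
        = Real.sqrt (2*Real.pi) * ∫ t : ℝ, pn.eval t * q k t := by
      rw [← integral_const_mul]
      exact integral_congr_ae (Eventually.of_forall fun t => by
        beta_reduce
        rw [hinner t]
        ring)
    rw [h2, horth k hk]
    ring
  -- lift to ℂ
  have hlift : ∀ x : ℝ, Pn x * ((Q k x : ℝ) : ℂ) = ((P.eval x * Q k x : ℝ) : ℂ) := by
    intro x
    rw [hval x, ← Complex.ofReal_mul]
  constructor
  · exact (hRint.ofReal (𝕜 := ℂ)).congr (Eventually.of_forall fun x => by
      beta_reduce
      exact (hlift x).symm)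
  · rw [integral_congr_ae (Eventually.of_forall fun x => by beta_reduce; exact hlift x)]
    have hcast : (∫ x : ℝ, ((P.eval x * Q k x : ℝ) : ℂ))
        = (((∫ x : ℝ, P.eval x * Q k x : ℝ)) : ℂ) := integral_ofReal
    rw [hcast, hRzero, Complex.ofReal_zero]
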